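/- For t ∈ (0,1) and z on the unit circle with z ≠ 1, define log_t|1-z| = -(1/2) ∑_{n≥1} e^{-nt}(zⁿ + z̄ⁿ)/n. Then log|1-z| ≤ t/2 + log_t|1-z|. -/

import Mathlib

theorem stmt_2 (z : ℂ) (hz : ‖z‖ = 1) (hz1 : z ≠ 1) (t : ℝ)
    (ht0 : 0 < t) (ht1 : t < 1) :
    Real.log ‖1 - z‖ ≤
      t / 2 + (-(1 / 2) * ∑' n : ℕ,
        Real.exp (-((n : ℝ) + 1) * t) * ((z ^ (n + 1) + (starRingEnd ℂ) (z ^ (n + 1))).re)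
          / ((n : ℝ) + 1)) := by
  set w : ℂ := (Real.exp (-t) : ℂ) * z with hw
  have hnsz : Complex.normSq z = 1 := by rw [← Complex.sq_norm, hz]; norm_num
  have hwnorm : ‖w‖ < 1 := by
    rw [hw, norm_mul]
    simp only [Complex.norm_real, Real.norm_eq_abs, abs_of_pos (Real.exp_pos _)]
    rw [show ‖z‖ = 1 from hz, mul_one]
    exact Real.exp_lt_one_iff.mpr (by linarith)
  have hsum : HasSum (fun n : ℕ ↦ w ^ n / n) (-Complex.log (1 - w)) :=
    Complex.hasSum_taylorSeries_neg_log hwnorm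
  have hsum1 : HasSum (fun n : ℕ ↦ w ^ (n + 1) / ((n : ℂ) + 1)) (-Complex.log (1 - w)) := by
    have h := (hasSum_nat_add_iff' (f := fun n : ℕ ↦ w ^ n / n) 1).mpr hsum
    simp only [Finset.range_one, Finset.sum_singleton, Nat.cast_zero, pow_zero, div_zero,
      sub_zero] at h
    have e : (fun n : ℕ ↦ w ^ (n + 1) / ((n : ℂ) + 1)) = fun n : ℕ ↦ w ^ (n + 1) / ((n + 1 : ℕ) : ℂ) := by
      funext n; norm_num
    rw [e]; exact h
  have hre : HasSum (fun n : ℕ ↦ (w ^ (n + 1) / ((n : ℂ) + 1)).re)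
      (-Complex.log (1 - w)).re := Complex.hasSum_re hsum1
  have hterm : ∀ n : ℕ,
      Real.exp (-((n : ℝ) + 1) * t) * ((z ^ (n + 1) + (starRingEnd ℂ) (z ^ (n + 1))).re)
          / ((n : ℝ) + 1) = 2 * (w ^ (n + 1) / ((n : ℂ) + 1)).re := by
    intro n
    have h1 : (z ^ (n + 1) + (starRingEnd ℂ) (z ^ (n + 1))).re = 2 * (z ^ (n + 1)).re := by
      rw [Complex.add_re, Complex.conj_re]; ring
    have h2 : w ^ (n + 1) = (Real.exp (-((n : ℝ) + 1) * t) : ℂ) * z ^ (n + 1) := by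
      rw [hw, mul_pow, ← Complex.ofReal_pow, ← Real.exp_nat_mul]
      congr 2
      push_cast; ring
    have h3 : ((n : ℂ) + 1) = ((((n : ℝ) + 1) : ℝ) : ℂ) := by push_cast; ring
    rw [h1, h2, h3, Complex.div_ofReal_re, Complex.re_ofReal_mul]
    ring
  have htsum : (∑' n : ℕ,
        Real.exp (-((n : ℝ) + 1) * t) * ((z ^ (n + 1) + (starRingEnd ℂ) (z ^ (n + 1))).re)
          / ((n : ℝ) + 1)) = 2 * (-Complex.log (1 - w)).re := by
    rw [tsum_congr hterm, (hre.mul_left 2).tsum_eq]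
  rw [htsum]
  have hlogre : (-Complex.log (1 - w)).re = -Real.log (‖1 - w‖) := by
    rw [Complex.neg_re, Complex.log_re]
  rw [hlogre]
  have key : Real.log (‖1 - z‖) ≤ t / 2 + Real.log (‖1 - w‖) := by
    have h1z : (0:ℝ) < ‖1 - z‖ := by
      rw [norm_pos_iff]
      intro h; exact hz1 (sub_eq_zero.mp h).symm
    have h1w : (0:ℝ) < ‖1 - w‖ := by
      rw [norm_pos_iff]; intro h
      have : ‖w‖ = 1 := by rw [show w = 1 from (sub_eq_zero.mp h).symm]; simp
      linarith
    have hsq : ‖1 - z‖ ^ 2 ≤ (Real.exp (t/2) * ‖1 - w‖) ^ 2 := by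
      have e1 : ‖1 - z‖ ^ 2 = 2 - 2 * z.re := by
        rw [Complex.sq_norm, Complex.normSq_sub, Complex.normSq_one, hnsz, one_mul,
          Complex.conj_re]
        ring
      have hnw : Complex.normSq w = Real.exp (-t) ^ 2 := by
        rw [hw, Complex.normSq_mul, Complex.normSq_ofReal, hnsz]; ring
      have hwre : w.re = Real.exp (-t) * z.re := by rw [hw, Complex.re_ofReal_mul]
      have e2 : ‖1 - w‖ ^ 2 = 1 - 2 * Real.exp (-t) * z.re + Real.exp (-t)^2 := by
        rw [Complex.sq_norm, Complex.normSq_sub, Complex.normSq_one, hnw, one_mul,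
          Complex.conj_re, hwre]
        ring
      have hexp : Real.exp (t/2) ^ 2 = Real.exp t := by
        rw [← Real.exp_nat_mul]
        congr 1
        push_cast; ring
      rw [mul_pow, hexp, e1, e2]
      have hc : 2 ≤ Real.exp t + Real.exp (-t) := by
        have := Real.one_le_cosh t
        rw [Real.cosh_eq] at this
        linarith
      have het : Real.exp t * Real.exp (-t) = 1 := by
        rw [← Real.exp_add]; simp
      nlinarith [Real.exp_pos t]
    have hle : ‖1 - z‖ ≤ Real.exp (t/2) * ‖1 - w‖ := by
      nlinarith [h1z, mul_pos (Real.exp_pos (t/2)) h1w]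
    calc Real.log (‖1 - z‖) ≤ Real.log (Real.exp (t/2) * ‖1 - w‖) :=
          Real.log_le_log h1z hle
      _ = t / 2 + Real.log (‖1 - w‖) := by
          rw [Real.log_mul (Real.exp_ne_zero _) (ne_of_gt h1w), Real.log_exp]
  linarith
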